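/- Let X be a T₁ topological space such that for every Banach space Y, every lower semicontinuous map φ : X → Set Y with nonempty closed convex values admits a continuous selection. Then X is paracompact. -/

import Mathlib

open Set Topology Filter
open scoped ENNReal

namespace MichaelConverse

local instance : Fact ((1:ℝ≥0∞) ≤ 1) := ⟨le_rfl⟩

variable {ι : Type}

lemma norm_eq (f : lp (fun _ : ι => ℝ) 1) : ‖f‖ = ∑' i, |f i| := by
  have := lp.norm_eq_tsum_rpow (p := 1) (by simp) f
  simpa [Real.norm_eq_abs] using this

lemma summable_abs (f : lp (fun _ : ι => ℝ) 1) : Summable fun i => |f i| := by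
  have h := (memℓp_gen_iff (p := 1) (by simp)).1 (lp.memℓp f)
  simpa [Real.norm_eq_abs] using h

lemma summable' (f : lp (fun _ : ι => ℝ) 1) : Summable (⇑f : ι → ℝ) :=
  (summable_abs f).of_abs

lemma abs_apply_le (f : lp (fun _ : ι => ℝ) 1) (i : ι) : |f i| ≤ ‖f‖ := by
  simpa [Real.norm_eq_abs] using lp.norm_apply_le_norm one_ne_zero f i

lemma dist_tsum (f g : lp (fun _ : ι => ℝ) 1) :
    |(∑' i, f i) - ∑' i, g i| ≤ ‖f - g‖ := by
  rw [← Summable.tsum_sub (summable' f) (summable' g), norm_eq]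
  have hc : ∀ i, (f - g) i = f i - g i := fun i => by simp
  calc |∑' i, (f i - g i)| ≤ ∑' i, |f i - g i| := by
        simpa [Real.norm_eq_abs] using
          norm_tsum_le_tsum_norm (f := fun i => f i - g i)
            (by simpa [Real.norm_eq_abs] using ((summable' f).sub (summable' g)).abs)
    _ = ∑' i, |(f - g) i| := by simp [hc]


variable {X : Type} [TopologicalSpace X] {α : Type} (U : α → Set X)

/-- The carrier: the part of the ℓ¹ simplex supported on indices whose set contains x. -/
def phi (x : X) : Set (lp (fun _ : α => ℝ) 1) :=
  {f | (∀ i, 0 ≤ f i) ∧ (∑' i, f i) = 1 ∧ ∀ i, x ∉ U i → f i = 0}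

lemma phi_nonempty {x : X} (hx : x ∈ ⋃ i, U i) : (phi U x).Nonempty := by
  classical
  obtain ⟨a, ha⟩ := mem_iUnion.1 hx
  refine ⟨lp.single 1 a (1:ℝ), fun i => ?_, ?_, fun i hi => ?_⟩
  · rcases eq_or_ne i a with rfl | h
    · simp [lp.single_apply_self]
    · simp [lp.single_apply_ne 1 a _ h, Pi.single_apply, h]
  · have := tsum_eq_sum (f := fun i : α => (lp.single 1 a (1:ℝ)) i) (s := {a}) (L := SummationFilter.unconditional α)
      (fun b hb => lp.single_apply_ne 1 a _ (by simpa using hb))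
    rw [this]
    simp [lp.single_apply_self]
  · rcases eq_or_ne i a with rfl | h
    · exact absurd ha hi
    · exact lp.single_apply_ne 1 a _ h

lemma eval_continuous (i : α) : Continuous fun g : lp (fun _ : α => ℝ) 1 => g i :=
  (continuous_apply i).comp (lp.uniformContinuous_coe (p := 1)).continuous

lemma sum_continuous : Continuous fun g : lp (fun _ : α => ℝ) 1 => ∑' i, g i := by
  refine (LipschitzWith.of_dist_le_mul (K := 1) fun f g => ?_).continuous
  rw [Real.dist_eq, NNReal.coe_one, one_mul, dist_eq_norm]
  exact dist_tsum f g

lemma phi_closed (x : X) : IsClosed (phi U x) := by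
  have h1 : IsClosed {f : lp (fun _ : α => ℝ) 1 | ∀ i, 0 ≤ f i} := by
    have : {f : lp (fun _ : α => ℝ) 1 | ∀ i, 0 ≤ f i} = ⋂ i, {f | 0 ≤ f i} := by
      ext f; simp
    rw [this]
    exact isClosed_iInter fun i => isClosed_le continuous_const (eval_continuous i)
  have h2 : IsClosed {f : lp (fun _ : α => ℝ) 1 | (∑' i, f i) = 1} :=
    isClosed_eq sum_continuous continuous_const
  have h3 : IsClosed {f : lp (fun _ : α => ℝ) 1 | ∀ i, x ∉ U i → f i = 0} := by
    have : {f : lp (fun _ : α => ℝ) 1 | ∀ i, x ∉ U i → f i = 0}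
        = ⋂ i, ⋂ (_ : x ∉ U i), {f | f i = 0} := by
      ext f; simp
    rw [this]
    exact isClosed_iInter fun i => isClosed_iInter fun _ =>
      isClosed_eq (eval_continuous i) continuous_const
  exact h1.inter (h2.inter h3)

lemma phi_convex (x : X) : Convex ℝ (phi U x) := by
  rintro f ⟨hf0, hf1, hfz⟩ g ⟨hg0, hg1, hgz⟩ a b ha hb hab
  have hcoord : ∀ i, (a • f + b • g) i = a * f i + b * g i := fun i => by simp; rfl
  refine ⟨fun i => ?_, ?_, fun i hi => ?_⟩
  · rw [hcoord]
    exact add_nonneg (mul_nonneg ha (hf0 i)) (mul_nonneg hb (hg0 i))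
  · rw [tsum_congr hcoord, Summable.tsum_add ((summable' f).mul_left a) ((summable' g).mul_left b),
      Summable.tsum_mul_left a (summable' f), Summable.tsum_mul_left b (summable' g),
      hf1, hg1]
    simpa using hab
  · rw [hcoord, hfz i hi, hgz i hi]; ring

lemma phi_lsc (hUo : ∀ i, IsOpen (U i)) (V : Set (lp (fun _ : α => ℝ) 1)) (hV : IsOpen V) :
    IsOpen {x | (phi U x ∩ V).Nonempty} := by
  classical
  rw [isOpen_iff_forall_mem_open]
  rintro x ⟨f, ⟨hf0, hf1, hfz⟩, hfV⟩
  obtain ⟨ε, hε, hball⟩ := Metric.isOpen_iff.1 hV f hfV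
  set δ : ℝ := min (ε/4) (1/2) with hδdef
  have hδpos : 0 < δ := lt_min (by linarith) (by norm_num)
  have hδhalf : δ ≤ 1/2 := min_le_right _ _
  have hδε : δ ≤ ε/4 := min_le_left _ _
  have hhs : HasSum (⇑f) 1 := hf1 ▸ (summable' f).hasSum
  have hev : ∀ᶠ s : Finset α in atTop, 1 - δ < ∑ i ∈ s, f i :=
    hhs.eventually (eventually_gt_nhds (by linarith))
  obtain ⟨T, hT⟩ := hev.exists
  set S : Finset α := T.filter (fun i => x ∈ U i) with hSdef
  have hsum_ST : ∑ i ∈ S, f i = ∑ i ∈ T, f i := by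
    refine Finset.sum_filter_of_ne fun i hi hne => ?_
    by_contra h
    exact hne (hfz i h)
  set s : ℝ := ∑ i ∈ S, f i with hsdef
  have hs_lb : 1 - δ < s := by rw [hsum_ST]; exact hT
  have hs_pos : 0 < s := by
    have : (1:ℝ) - δ ≥ 1/2 := by linarith
    linarith
  have hs_le1 : s ≤ 1 := by
    have := Summable.sum_le_tsum S (fun i _ => hf0 i) (summable' f)
    rw [hf1] at this; exact this
  -- the renormalized truncation
  set g : α → ℝ := fun i => if i ∈ S then f i / s else 0 with hgdef
  have hg_mem : Memℓp g 1 := by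
    apply memℓp_gen
    apply summable_of_ne_finset_zero (s := S)
    intro i hi
    simp [hgdef, hi]
  set G : lp (fun _ : α => ℝ) 1 := ⟨g, hg_mem⟩ with hGdef
  have hG : ∀ i, G i = g i := fun i => rfl
  have hGsum : (∑' i, G i) = 1 := by
    rw [tsum_eq_sum (s := S) (fun i hi => by rw [hG]; simp [hgdef, hi])]
    have : ∀ i ∈ S, G i = f i / s := fun i hi => by rw [hG]; simp [hgdef, hi]
    rw [Finset.sum_congr rfl this, ← Finset.sum_div, ← hsdef, div_self hs_pos.ne']
  -- distance estimate
  have hoffS : Summable fun i => if i ∈ S then 0 else f i := by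
    refine Summable.of_nonneg_of_le (fun i => ?_) (fun i => ?_) (summable' f)
    · split <;> simp [hf0]
    · split <;> simp [hf0]
  have htsum_offS : (∑' i, if i ∈ S then 0 else f i) = 1 - s := by
    have h1 : ∀ i, (if i ∈ S then 0 else f i) = f i - (if i ∈ S then f i else 0) := by
      intro i; split <;> simp
    have h2 : Summable fun i => if i ∈ S then f i else (0:ℝ) :=
      summable_of_ne_finset_zero (s := S) (fun i hi => by simp [hi])
    rw [tsum_congr h1, Summable.tsum_sub (summable' f) h2, hf1,
      tsum_eq_sum (s := S) (fun i hi => by simp [hi])]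
    congr 1
    exact Finset.sum_congr rfl fun i hi => by simp [hi]
  have hkey : ∀ i, |G i - f i| = (G i - f i) + 2 * (if i ∈ S then 0 else f i) := by
    intro i
    rw [hG]
    by_cases hi : i ∈ S
    · have hfs : f i ≤ f i / s := by
        rw [le_div_iff₀ hs_pos]
        nlinarith [hf0 i]
      simp only [hgdef, if_pos hi]
      rw [abs_of_nonneg (by linarith)]
      ring
    · simp only [hgdef, if_neg hi]
      rw [abs_of_nonpos (by simpa using hf0 i)]
      ring
  have hGf : ‖G - f‖ < ε := by
    have hcoords : ∀ i, (G - f) i = G i - f i := fun i => by simp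
    rw [norm_eq]
    have : (∑' i, |(G - f) i|) = ∑' i, ((G i - f i) + 2 * (if i ∈ S then 0 else f i)) := by
      refine tsum_congr fun i => ?_
      rw [hcoords i, hkey i]
    rw [this, Summable.tsum_add ((summable' G).sub (summable' f)) (hoffS.mul_left 2),
      Summable.tsum_sub (summable' G) (summable' f), Summable.tsum_mul_left 2 hoffS,
      hGsum, hf1, htsum_offS]
    have : 1 - s < δ := by linarith
    linarith
  -- the neighborhood
  refine ⟨⋂ i ∈ S, U i, ?_, isOpen_biInter_finset fun i _ => hUo i, ?_⟩
  · intro x' hx'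
    refine ⟨G, ⟨fun i => ?_, hGsum, fun i hi => ?_⟩, hball ?_⟩
    · rw [hG, hgdef]
      dsimp only
      split
      · exact div_nonneg (hf0 _) hs_pos.le
      · exact le_refl 0
    · have hiS : i ∉ S := fun hiS => hi (mem_iInter₂.1 hx' i hiS)
      rw [hG]; simp [hgdef, hiS]
    · rwa [Metric.mem_ball, dist_eq_norm]
  · rw [mem_iInter₂]
    intro i hi
    exact (Finset.mem_filter.1 hi).2

lemma bddAbove_range {ι : Type} (f : lp (fun _ : ι => ℝ) 1) :
    BddAbove (Set.range fun i => f i) := by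
  refine ⟨‖f‖, ?_⟩
  rintro y ⟨i, rfl⟩
  exact (le_abs_self _).trans (abs_apply_le f i)

lemma sup_le_sup_add {ι : Type} [Nonempty ι] (f g : lp (fun _ : ι => ℝ) 1) :
    (⨆ i, f i) ≤ (⨆ i, g i) + ‖f - g‖ := by
  refine ciSup_le fun i => ?_
  have h1 : f i - g i ≤ ‖f - g‖ := by
    have h := abs_apply_le (f - g) i
    have hc : (f - g) i = f i - g i := by simp
    rw [hc] at h
    exact (le_abs_self _).trans h
  have h2 : g i ≤ ⨆ j, g j := le_ciSup (bddAbove_range g) i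
  linarith

lemma sup_continuous {ι : Type} [Nonempty ι] :
    Continuous fun f : lp (fun _ : ι => ℝ) 1 => ⨆ i, f i := by
  refine (LipschitzWith.of_dist_le_mul (K := 1) fun f g => ?_).continuous
  rw [Real.dist_eq, NNReal.coe_one, one_mul, dist_eq_norm, abs_sub_le_iff]
  constructor
  · have := sup_le_sup_add f g; linarith
  · have h := sup_le_sup_add g f
    rw [norm_sub_rev] at h
    linarith

end MichaelConverse

open MichaelConverse in
/-- Converse of Michael's theorem: the selection property for all
Banach-space-valued LSC convex-valued maps implies paracompactness. -/
theorem paracompact_of_selection_property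
    {X : Type} [TopologicalSpace X] [T1Space X]
    (hsel : ∀ (Y : Type) [NormedAddCommGroup Y] [NormedSpace ℝ Y] [CompleteSpace Y]
      (φ : X → Set Y),
      (∀ U : Set Y, IsOpen U → IsOpen {x | (φ x ∩ U).Nonempty}) →
      (∀ x, (φ x).Nonempty) → (∀ x, IsClosed (φ x)) → (∀ x, Convex ℝ (φ x)) →
      ∃ f : X → Y, Continuous f ∧ ∀ x, f x ∈ φ x) :
    ParacompactSpace X := by
  constructor
  intro α U hUo hUc
  rcases isEmpty_or_nonempty X with hX | hX
  · exact ⟨α, U, hUo, hUc, fun x => isEmptyElim x, fun a => ⟨a, subset_rfl⟩⟩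
  haveI : Fact ((1:ℝ≥0∞) ≤ 1) := ⟨le_rfl⟩
  have hmem : ∀ x : X, x ∈ ⋃ i, U i := fun x => by rw [hUc]; trivial
  haveI hαne : Nonempty α := by
    obtain ⟨x₀⟩ := hX
    obtain ⟨a, -⟩ := Set.mem_iUnion.1 (hmem x₀)
    exact ⟨a⟩
  obtain ⟨f, hfc, hfφ⟩ := hsel (lp (fun _ : α => ℝ) 1) (phi U)
    (phi_lsc U hUo) (fun x => phi_nonempty U (hmem x))
    (phi_closed U) (phi_convex U)
  have hx0 : ∀ (x : X) (i : α), 0 ≤ f x i := fun x i => (hfφ x).1 i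
  have hx1 : ∀ x : X, (∑' i, f x i) = 1 := fun x => (hfφ x).2.1
  have hxz : ∀ (x : X) (i : α), x ∉ U i → f x i = 0 := fun x i => (hfφ x).2.2 i
  set M : X → ℝ := fun x => ⨆ i, f x i with hMdef
  have hM : Continuous M := sup_continuous.comp hfc
  have hp : ∀ i : α, Continuous fun x => f x i := fun i => (eval_continuous i).comp hfc
  have hMle : ∀ (x : X) (i : α), f x i ≤ M x := fun x i => le_ciSup (bddAbove_range (f x)) i
  have hMnn : ∀ x, 0 ≤ M x := fun x =>
    le_trans (hx0 x (Classical.arbitrary α)) (hMle x _)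
  have hMpos : ∀ x, 0 < M x := by
    intro x
    obtain ⟨i, hi⟩ : ∃ i, 0 < f x i := by
      by_contra h
      push_neg at h
      have hz : ∀ i, f x i = 0 := fun i => le_antisymm (h i) (hx0 x i)
      have h1 := hx1 x
      rw [tsum_congr hz, tsum_zero] at h1
      exact one_ne_zero h1.symm
    exact lt_of_lt_of_le hi (hMle x i)
  have hMdiff : ∀ x y, M x ≤ M y + ‖f x - f y‖ := fun x y => sup_le_sup_add (f x) (f y)
  set W : α → Set X := fun a => {x | M x < 2 * f x a} with hWdef
  have hWo : ∀ a, IsOpen (W a) := fun a => isOpen_lt hM (continuous_const.mul (hp a))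
  have hWU : ∀ a, W a ⊆ U a := by
    intro a x hx
    by_contra hxa
    have h0 : f x a = 0 := hxz x a hxa
    have hlt : M x < 0 := by
      have := hx
      simp only [hWdef, Set.mem_setOf_eq, h0, mul_zero] at this
      exact this
    exact absurd hlt (not_lt.2 (hMnn x))
  have hWcov : ⋃ a, W a = Set.univ := by
    ext x
    simp only [Set.mem_iUnion, Set.mem_univ, iff_true]
    have hlt : M x / 2 < ⨆ i, f x i := by
      show M x / 2 < M x
      have := hMpos x
      linarith
    obtain ⟨a, ha⟩ := exists_lt_of_lt_ciSup hlt
    exact ⟨a, by simp only [hWdef, Set.mem_setOf_eq]; linarith⟩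
  have hWlf : LocallyFinite W := by
    intro x
    have hax : 0 < M x := hMpos x
    refine ⟨f ⁻¹' Metric.ball (f x) (M x / 4),
      hfc.continuousAt.preimage_mem_nhds (Metric.ball_mem_nhds _ (by linarith)), ?_⟩
    have hfin : {i : α | M x / 8 < f x i}.Finite := by
      have ht := (summable' (f x)).tendsto_cofinite_zero
      have hev : ∀ᶠ i in Filter.cofinite, f x i < M x / 8 :=
        ht.eventually_lt_const (by linarith)
      have hfin := Filter.eventually_cofinite.1 hev
      exact hfin.subset fun i hi => by
        simp only [Set.mem_setOf_eq] at hi ⊢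
        exact not_lt.2 hi.le
    refine hfin.subset ?_
    rintro i ⟨y, hyW, hyN⟩
    have hdist : ‖f y - f x‖ < M x / 4 := by
      rw [← dist_eq_norm]
      exact hyN
    have hdist' : ‖f x - f y‖ < M x / 4 := by rwa [norm_sub_rev]
    have hMy : 3 * M x / 4 < M y := by
      have := hMdiff x y
      linarith
    have hfyi : 3 * M x / 8 < f y i := by
      have := hyW
      simp only [hWdef, Set.mem_setOf_eq] at this
      linarith
    have hcoord : |f y i - f x i| ≤ ‖f y - f x‖ := by
      have h := abs_apply_le (f y - f x) i
      have hc : (f y - f x) i = f y i - f x i := by simp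
      rwa [hc] at h
    have habs : f y i - f x i ≤ ‖f y - f x‖ := (le_abs_self _).trans hcoord
    simp only [Set.mem_setOf_eq]
    linarith
  exact ⟨α, W, hWo, hWcov, hWlf, fun a => ⟨a, hWU a⟩⟩
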